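/- Suppose N ≥ 2 bidders have an exchangeable prior λ on V^N with some profile v ∈ supp(λ) in which two bidders have different values. If an information structure has mutually independent signals (private private) and a Bayes Nash equilibrium σ in which the allocation is always efficient (the winner has the maximal value) and bids equal signals, then the seller's expected revenue is strictly positive; equivalently, aggregate bidder surplus is strictly below E[max_i v_i]. -/

import Mathlib

open scoped Classical BigOperators

/-- Highest coordinate. -/
noncomputable def maxVal {N : ℕ} (β : Fin N → ℝ) : ℝ := sSup (Set.range β)

/-- Second-highest coordinate. -/
noncomputable def secmax {N : ℕ} (β : Fin N → ℝ) : ℝ :=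
  sInf {x | ∃ i : Fin N, x = sSup {y | ∃ j : Fin N, j ≠ i ∧ y = β j}}

/-- Uniform tie-breaking winning share. -/
noncomputable def winShare {N : ℕ} (β : Fin N → ℝ) (i : Fin N) : ℝ :=
  if β i = maxVal β then
    1 / ((Finset.univ.filter fun j => β j = maxVal β).card : ℝ)
  else 0

/-- Impossibility of full surplus for bidders under private private information: with an
exchangeable prior `lam` whose support contains a profile where two bidders have
different values, any information structure with mutually independent (nonnegative)
signals admitting a Bayes Nash equilibrium in which bids equal signals and the
allocation is always efficient yields strictly positive seller revenue; equivalently,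
aggregate bidder surplus is strictly below `E[max v]`. -/
lemma le_maxVal {N : ℕ} (β : Fin N → ℝ) (i : Fin N) : β i ≤ maxVal β :=
  le_csSup (Set.finite_range β).bddAbove ⟨i, rfl⟩

lemma exists_maxVal {N : ℕ} (hN : 0 < N) (β : Fin N → ℝ) : ∃ i, β i = maxVal β := by
  haveI : Nonempty (Fin N) := ⟨⟨0, hN⟩⟩
  have h := (Set.range_nonempty β).csSup_mem (Set.finite_range β)
  obtain ⟨i, hi⟩ := h
  exact ⟨i, hi⟩

lemma secmax_nonneg {N : ℕ} (hN : 2 ≤ N) (β : Fin N → ℝ) (h0 : ∀ j, 0 ≤ β j) :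
    0 ≤ secmax β := by
  apply Real.sInf_nonneg
  rintro x ⟨i, rfl⟩
  have hcard : 1 < Fintype.card (Fin N) := by simp; omega
  obtain ⟨j, hj⟩ := Fintype.exists_ne_of_one_lt_card hcard i
  have hfin : {y : ℝ | ∃ j : Fin N, j ≠ i ∧ y = β j}.Finite := by
    apply (Set.finite_range β).subset
    rintro y ⟨j, _, rfl⟩; exact ⟨j, rfl⟩
  exact le_trans (h0 j) (le_csSup hfin.bddAbove ⟨j, hj, rfl⟩)

lemma secmax_pos {N : ℕ} (hN : 2 ≤ N) (β : Fin N → ℝ)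
    {i j : Fin N} (hij : i ≠ j) (hi : 0 < β i) (hj : 0 < β j) :
    0 < secmax β := by
  haveI : Nonempty (Fin N) := ⟨⟨0, by omega⟩⟩
  have hne : {x : ℝ | ∃ i : Fin N, x = sSup {y | ∃ j : Fin N, j ≠ i ∧ y = β j}}.Nonempty := by
    exact ⟨_, ⟨Classical.arbitrary (Fin N), rfl⟩⟩
  have hmin : 0 < min (β i) (β j) := lt_min hi hj
  refine lt_of_lt_of_le hmin (le_csInf hne ?_)
  rintro x ⟨k, rfl⟩
  have hfin : {y : ℝ | ∃ j' : Fin N, j' ≠ k ∧ y = β j'}.Finite := by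
    apply (Set.finite_range β).subset
    rintro y ⟨j', _, rfl⟩; exact ⟨j', rfl⟩
  by_cases hk : k = i
  · subst hk
    exact le_trans (min_le_right _ _) (le_csSup hfin.bddAbove ⟨j, fun h => hij h.symm, rfl⟩)
  · exact le_trans (min_le_left _ _) (le_csSup hfin.bddAbove ⟨i, fun h => hk h.symm, rfl⟩)

lemma winShare_nonneg {N : ℕ} (β : Fin N → ℝ) (i : Fin N) : 0 ≤ winShare β i := by
  unfold winShare; split
  · positivity
  · exact le_refl 0

lemma winShare_pos {N : ℕ} (β : Fin N → ℝ) {i : Fin N} (h : β i = maxVal β) :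
    0 < winShare β i := by
  have hmem : i ∈ Finset.univ.filter (fun j => β j = maxVal β) := by
    simp [h]
  have hc : 0 < ((Finset.univ.filter fun j => β j = maxVal β).card : ℝ) := by
    have := Finset.card_pos.mpr ⟨i, hmem⟩
    exact_mod_cast this
  unfold winShare
  rw [if_pos h]
  positivity

lemma sum_winShare {N : ℕ} (hN : 0 < N) (β : Fin N → ℝ) :
    ∑ i, winShare β i = 1 := by
  obtain ⟨i0, hi0⟩ := exists_maxVal hN β
  set F := Finset.univ.filter (fun j => β j = maxVal β) with hF
  have hFne : i0 ∈ F := by simp [hF, hi0]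
  have hcard : 0 < F.card := Finset.card_pos.mpr ⟨i0, hFne⟩
  have : ∑ i, winShare β i = ∑ i ∈ F, 1 / (F.card : ℝ) := by
    rw [Finset.sum_filter]
    apply Finset.sum_congr rfl
    intro i _
    unfold winShare
    by_cases h : β i = maxVal β <;> simp [h, hF]
  rw [this, Finset.sum_const, nsmul_eq_mul]
  field_simp

lemma sum_winShare_mul {N : ℕ} (hN : 0 < N) (β : Fin N → ℝ) (v : Fin N → ℝ) (c : ℝ)
    (hv : ∀ i, 0 < winShare β i → v i = maxVal v) :
    ∑ i, winShare β i * (v i - c) = maxVal v - c := by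
  have : ∑ i, winShare β i * (v i - c) = ∑ i, winShare β i * (maxVal v - c) := by
    apply Finset.sum_congr rfl
    intro i _
    rcases lt_or_eq_of_le (winShare_nonneg β i) with h | h
    · rw [hv i h]
    · rw [← h, zero_mul, zero_mul]
  rw [this, ← Finset.sum_mul, sum_winShare hN, one_mul]

theorem private_private_revenue_positive (N : ℕ) (hN : 2 ≤ N)
    (PV : Finset (Fin N → ℝ)) (lam : (Fin N → ℝ) → ℝ)
    (hl0 : ∀ v, 0 ≤ lam v) (hl1 : ∑ v ∈ PV, lam v = 1)
    (hPVperm : ∀ (τ : Equiv.Perm (Fin N)) (v : Fin N → ℝ), v ∈ PV → v ∘ τ ∈ PV)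
    (hsym : ∀ (τ : Equiv.Perm (Fin N)) (v : Fin N → ℝ), lam (v ∘ τ) = lam v)
    (hdiff : ∃ v ∈ PV, lam v ≠ 0 ∧ ∃ i j : Fin N, v i ≠ v j)
    (S : Fin N → Finset ℝ) (hS : ∀ i, ∀ x ∈ S i, 0 ≤ x)
    (π : (Fin N → ℝ) → (Fin N → ℝ) → ℝ)
    (hπ0 : ∀ v s, 0 ≤ π v s)
    (hmarg : ∀ v ∈ PV, ∑ s ∈ Fintype.piFinset S, π v s = lam v)
    -- private private: the signal marginal is the product of its coordinate marginals
    (hpp : ∀ s ∈ Fintype.piFinset S,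
      (∑ v ∈ PV, π v s) =
        ∏ i, (∑ s' ∈ (Fintype.piFinset S).filter (fun s' => s' i = s i),
          ∑ v ∈ PV, π v s'))
    -- efficiency: whenever a bidder wins with positive probability, she has maximal value
    (heff : ∀ v ∈ PV, ∀ s ∈ Fintype.piFinset S, π v s ≠ 0 →
      ∀ i, 0 < winShare s i → v i = maxVal v)
    -- truthful bidding (bids = signals) is a Bayes Nash equilibrium
    (hBNE : ∀ i (d : ℝ → ℝ),
      (∑ v ∈ PV, ∑ s ∈ Fintype.piFinset S, π v s *
          (winShare (Function.update s i (d (s i))) i *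
            (v i - secmax (Function.update s i (d (s i))))))
      ≤ ∑ v ∈ PV, ∑ s ∈ Fintype.piFinset S, π v s *
          (winShare s i * (v i - secmax s))) :
    0 < (∑ v ∈ PV, ∑ s ∈ Fintype.piFinset S, π v s * secmax s) ∧
    (∑ v ∈ PV, ∑ s ∈ Fintype.piFinset S, π v s *
        ∑ i, winShare s i * (v i - secmax s))
      < ∑ v ∈ PV, lam v * maxVal v := by
  classical
  have hNpos : 0 < N := by omega
  set SS := Fintype.piFinset S with hSS
  let P : (Fin N → ℝ) → ℝ := fun s => ∑ v ∈ PV, π v s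
  have hP0 : ∀ s, 0 ≤ P s := fun s => Finset.sum_nonneg (fun v _ => hπ0 v s)
  have hcoord : ∀ s ∈ SS, ∀ k, 0 ≤ s k := by
    intro s hs k
    exact hS k _ ((Fintype.mem_piFinset).1 hs k)
  have hmarglb : ∀ (k : Fin N) (s₀ : Fin N → ℝ), s₀ ∈ SS → ∀ x, s₀ k = x →
      P s₀ ≤ ∑ s' ∈ SS.filter (fun s' => s' k = x), P s' := by
    intro k s₀ hs₀ x hx
    apply Finset.single_le_sum (f := P) (fun s' _ => hP0 s')
    simp [Finset.mem_filter, hs₀, hx]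
  -- Key claim: there is a signal profile of positive probability with positive second max
  have key : ∃ s ∈ SS, 0 < P s ∧ 0 < secmax s := by
    by_cases hcase : ∃ i j : Fin N, i ≠ j ∧ (∃ s ∈ SS, 0 < P s ∧ 0 < s i) ∧
        (∃ s ∈ SS, 0 < P s ∧ 0 < s j)
    · obtain ⟨i, j, hij, ⟨si, hsiS, hsiP, hsi⟩, ⟨sj, hsjS, hsjP, hsj⟩⟩ := hcase
      set st := Function.update si j (sj j) with hst
      have hstS : st ∈ SS := by
        rw [hSS, Fintype.mem_piFinset]
        intro k
        by_cases hk : k = j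
        · rw [hk, hst, Function.update_self]
          exact Fintype.mem_piFinset.1 hsjS j
        · rw [hst, Function.update_of_ne hk]
          exact Fintype.mem_piFinset.1 hsiS k
      have hPpos : 0 < P st := by
        have hprod := hpp st hstS
        have hPst : P st = ∏ k, (∑ s' ∈ SS.filter (fun s' => s' k = st k), P s') := hprod
        rw [hPst]
        apply Finset.prod_pos
        intro k _
        by_cases hk : k = j
        · have h1 : st j = sj j := Function.update_self _ _ _
          rw [hk]
          exact lt_of_lt_of_le hsjP (hmarglb j sj hsjS (st j) h1.symm)
        · have h1 : st k = si k := Function.update_of_ne hk _ _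
          exact lt_of_lt_of_le hsiP (hmarglb k si hsiS (st k) h1.symm)
      refine ⟨st, hstS, hPpos, secmax_pos hN st hij ?_ ?_⟩
      · rw [hst, Function.update_of_ne hij]; exact hsi
      · rw [hst, Function.update_self]; exact hsj
    · exfalso
      -- at most one bidder ever receives a positive signal
      have hB : ∀ i j : Fin N, (∃ s ∈ SS, 0 < P s ∧ 0 < s i) →
          (∃ s ∈ SS, 0 < P s ∧ 0 < s j) → i = j := by
        intro i j hi hj
        by_contra hij
        exact hcase ⟨i, j, hij, hi, hj⟩
      obtain ⟨i₀, hi₀⟩ : ∃ i₀ : Fin N, ∀ k, k ≠ i₀ →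
          ¬ (∃ s ∈ SS, 0 < P s ∧ 0 < s k) := by
        by_cases hBne : ∃ i : Fin N, ∃ s ∈ SS, 0 < P s ∧ 0 < s i
        · obtain ⟨i, hi⟩ := hBne
          exact ⟨i, fun k hk hkB => hk (hB k i hkB hi)⟩
        · exact ⟨⟨0, hNpos⟩, fun k _ hkB => hBne ⟨k, hkB⟩⟩
      obtain ⟨v, hvPV, hvlam, i, j, hvij⟩ := hdiff
      have hvlampos : 0 < lam v := lt_of_le_of_ne (hl0 v) (Ne.symm hvlam)
      -- a coordinate of v strictly below the max
      obtain ⟨j₀, hj₀⟩ : ∃ j₀ : Fin N, v j₀ < maxVal v := by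
        rcases lt_or_eq_of_le (le_maxVal v i) with h | h
        · exact ⟨i, h⟩
        · refine ⟨j, lt_of_le_of_ne (le_maxVal v j) ?_⟩
          intro hj
          exact hvij (by rw [h, hj])
      set τ : Equiv.Perm (Fin N) := Equiv.swap i₀ j₀ with hτ
      set w : Fin N → ℝ := v ∘ τ with hw
      have hwPV : w ∈ PV := hPVperm τ v hvPV
      have hwmax : maxVal w = maxVal v := by
        unfold maxVal
        rw [hw, τ.surjective.range_comp v]
      have hwlt : w i₀ < maxVal w := by
        rw [hwmax]
        have : w i₀ = v j₀ := by
          rw [hw]; simp [hτ, Equiv.swap_apply_left]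
        rw [this]; exact hj₀
      have hwlam : 0 < lam w := by rw [hw, hsym]; exact hvlampos
      obtain ⟨s, hsS, hne⟩ : ∃ s ∈ SS, π w s ≠ 0 := by
        apply Finset.exists_ne_zero_of_sum_ne_zero
        rw [hmarg w hwPV]
        exact ne_of_gt hwlam
      have hPs : 0 < P s :=
        lt_of_lt_of_le (lt_of_le_of_ne (hπ0 w s) (Ne.symm hne))
          (Finset.single_le_sum (f := fun v => π v s) (fun v _ => hπ0 v s) hwPV)
      have hks : ∀ k, k ≠ i₀ → s k = 0 := by
        intro k hk
        have h1 : ¬ 0 < s k := fun h => hi₀ k hk ⟨s, hsS, hPs, h⟩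
        exact le_antisymm (not_lt.1 h1) (hcoord s hsS k)
      have hsi₀max : s i₀ = maxVal s := by
        obtain ⟨k, hk⟩ := exists_maxVal hNpos s
        by_cases hki : k = i₀
        · rw [← hki]; exact hk
        · have h0 : s k = 0 := hks k hki
          have h1 : s i₀ ≤ maxVal s := le_maxVal s i₀
          have h2 : maxVal s = 0 := by rw [← hk, h0]
          have h3 := hcoord s hsS i₀
          linarith
      exact absurd (heff w hwPV s hsS hne i₀ (winShare_pos s hsi₀max)) (ne_of_lt hwlt)
  obtain ⟨sstar, hsS, hsP, hssec⟩ := key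
  have hrev : 0 < ∑ v ∈ PV, ∑ s ∈ SS, π v s * secmax s := by
    rw [Finset.sum_comm]
    have hcg : ∀ s ∈ SS, ∑ v ∈ PV, π v s * secmax s = P s * secmax s := by
      intro s _
      rw [← Finset.sum_mul]
    rw [Finset.sum_congr rfl hcg]
    apply Finset.sum_pos'
    · intro s hs
      exact mul_nonneg (hP0 s) (secmax_nonneg hN s (hcoord s hs))
    · exact ⟨sstar, hsS, mul_pos hsP hssec⟩
  refine ⟨hrev, ?_⟩
  have hsurp : (∑ v ∈ PV, ∑ s ∈ SS, π v s * ∑ i, winShare s i * (v i - secmax s))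
      = ∑ v ∈ PV, lam v * maxVal v - ∑ v ∈ PV, ∑ s ∈ SS, π v s * secmax s := by
    have step1 : (∑ v ∈ PV, ∑ s ∈ SS, π v s * ∑ i, winShare s i * (v i - secmax s))
        = ∑ v ∈ PV, ∑ s ∈ SS, (π v s * maxVal v - π v s * secmax s) := by
      apply Finset.sum_congr rfl
      intro v hv
      apply Finset.sum_congr rfl
      intro s hs
      by_cases hz : π v s = 0
      · simp [hz]
      · rw [sum_winShare_mul hNpos s v (secmax s) (heff v hv s hs hz), mul_sub]
    rw [step1]
    have step2 : ∀ v ∈ PV, ∑ s ∈ SS, (π v s * maxVal v - π v s * secmax s)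
        = lam v * maxVal v - ∑ s ∈ SS, π v s * secmax s := by
      intro v hv
      rw [Finset.sum_sub_distrib, ← Finset.sum_mul, hmarg v hv]
    rw [Finset.sum_congr rfl step2, Finset.sum_sub_distrib]
  rw [hsurp]
  linarith
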